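/- Let x_1,...,x_n ∈ ℝ^d with ‖x_i‖ ≤ 1, Σ̂ = (1/n)∑_i x_i x_iᵀ, λ > 0, and let b ∈ ℝ^n be a vector with at most αn nonzero entries, each bounded in absolute value by ζ > 0. Then ‖(1/n)∑_{i=1}^n b_i x_i‖_{(Σ̂ + λI)^{-1}} ≤ ζ√α, where ‖v‖_A := √(vᵀ A v). -/

import Mathlib

open Finset Matrix

private lemma tripleSum {n d : ℕ} (u : Fin n → Fin d → ℝ) (y : Fin d → ℝ) (a : ℝ) :
    ∑ j, y j * ∑ k, (a * ∑ i, u i j * u i k) * y k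
      = a * ∑ i, (∑ j, u i j * y j) ^ 2 := by
  calc ∑ j, y j * ∑ k, (a * ∑ i, u i j * u i k) * y k
      = ∑ j, ∑ k, ∑ i, a * (u i j * y j * (u i k * y k)) := by
        refine Finset.sum_congr rfl fun j _ => ?_
        rw [Finset.mul_sum]
        refine Finset.sum_congr rfl fun k _ => ?_
        rw [Finset.mul_sum, Finset.sum_mul, Finset.mul_sum]
        exact Finset.sum_congr rfl fun i _ => by ring
    _ = ∑ j, ∑ i, ∑ k, a * (u i j * y j * (u i k * y k)) :=
        Finset.sum_congr rfl fun j _ => Finset.sum_comm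
    _ = ∑ i, ∑ j, ∑ k, a * (u i j * y j * (u i k * y k)) := Finset.sum_comm
    _ = a * ∑ i, (∑ j, u i j * y j) ^ 2 := by
        rw [Finset.mul_sum]
        refine Finset.sum_congr rfl fun i _ => ?_
        rw [pow_two, Finset.sum_mul_sum, Finset.mul_sum]
        refine Finset.sum_congr rfl fun j _ => ?_
        rw [Finset.mul_sum]

/-- If `b ∈ ℝⁿ` has at most `αn` nonzero entries, each bounded by `ζ`, `‖x_i‖ ≤ 1`,
`Σ̂ = (1/n)∑ x_i x_iᵀ` and `λ > 0`, then
`‖(1/n)∑ b_i x_i‖_{(Σ̂+λI)⁻¹} ≤ ζ √α`, where `‖v‖_A = √(vᵀ A v)`. -/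
theorem stmt1 {n d : ℕ} (hn : 0 < n) (x : Fin n → EuclideanSpace ℝ (Fin d))
    (hx : ∀ i, ‖x i‖ ≤ 1) (lam α ζ : ℝ) (hlam : 0 < lam)
    (hα0 : 0 ≤ α) (hα1 : α ≤ 1) (hζ : 0 < ζ)
    (b : Fin n → ℝ)
    (hcard : ((univ.filter fun i => b i ≠ 0).card : ℝ) ≤ α * n)
    (hb : ∀ i, |b i| ≤ ζ)
    (Sighat : Matrix (Fin d) (Fin d) ℝ)
    (hSig : Sighat = (n : ℝ)⁻¹ • ∑ i, vecMulVec (fun j => x i j) (fun j => x i j))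
    (v : Fin d → ℝ) (hv : v = fun j => (n : ℝ)⁻¹ * ∑ i, b i * x i j) :
    Real.sqrt (v ⬝ᵥ (Sighat + lam • 1)⁻¹.mulVec v) ≤ ζ * Real.sqrt α := by
  have hn' : (0:ℝ) < n := by exact_mod_cast hn
  set A := Sighat + lam • (1 : Matrix (Fin d) (Fin d) ℝ) with hAdef
  -- quadratic form of Sighat
  have key : ∀ y : Fin d → ℝ, y ⬝ᵥ Sighat *ᵥ y
      = (n:ℝ)⁻¹ * ∑ i, (∑ j, x i j * y j)^2 := by
    intro y
    rw [hSig]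
    simp only [Matrix.mulVec, Matrix.smul_apply, Matrix.sum_apply, Matrix.vecMulVec_apply,
      dotProduct, smul_eq_mul]
    exact tripleSum (fun i j => x i j) y _
  have hSigPSD : Sighat.PosSemidef := by
    refine Matrix.posSemidef_iff_dotProduct_mulVec.mpr ⟨?_, ?_⟩
    · rw [hSig]
      show _ᴴ = _
      ext j k
      simp only [Matrix.conjTranspose_apply, Matrix.smul_apply, Matrix.sum_apply,
        Matrix.vecMulVec_apply, star_trivial, smul_eq_mul]
      congr 1
      exact Finset.sum_congr rfl fun i _ => mul_comm _ _
    · intro y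
      rw [star_trivial, key]
      positivity
  have hIpd : (lam • (1 : Matrix (Fin d) (Fin d) ℝ)).PosDef := by
    refine Matrix.posDef_iff_dotProduct_mulVec.mpr ⟨?_, ?_⟩
    · show _ᴴ = _
      simp
    · intro y hy
      rw [star_trivial, Matrix.smul_mulVec, Matrix.one_mulVec, dotProduct_smul,
        smul_eq_mul]
      obtain ⟨j, hj⟩ := Function.ne_iff.mp hy
      have hyy : 0 < ∑ i, y i * y i :=
        Finset.sum_pos' (fun i _ => mul_self_nonneg _)
          ⟨j, Finset.mem_univ j, mul_self_pos.mpr hj⟩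
      exact mul_pos hlam hyy
  have hApd : A.PosDef := Matrix.PosDef.posSemidef_add hSigPSD hIpd
  have hdet : IsUnit A.det := hApd.det_pos.ne'.isUnit
  set w : Fin d → ℝ := A⁻¹ *ᵥ v with hwdef
  have hAw : A *ᵥ w = v := by
    rw [hwdef, Matrix.mulVec_mulVec, Matrix.mul_nonsing_inv A hdet, Matrix.one_mulVec]
  set c : Fin n → ℝ := fun i => ∑ j, x i j * w j with hcdef
  set T : ℝ := v ⬝ᵥ w with hTdef
  have hvw1 : T = (n:ℝ)⁻¹ * ∑ i, b i * c i := by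
    rw [hTdef, hv]
    show ∑ j, ((n:ℝ)⁻¹ * ∑ i, b i * x i j) * w j = _
    calc ∑ j, ((n:ℝ)⁻¹ * ∑ i, b i * x i j) * w j
        = ∑ j, ∑ i, (n:ℝ)⁻¹ * (b i * (x i j * w j)) := by
          refine Finset.sum_congr rfl fun j _ => ?_
          rw [Finset.mul_sum, Finset.sum_mul]
          exact Finset.sum_congr rfl fun i _ => by ring
      _ = ∑ i, ∑ j, (n:ℝ)⁻¹ * (b i * (x i j * w j)) := Finset.sum_comm
      _ = (n:ℝ)⁻¹ * ∑ i, b i * c i := by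
          rw [Finset.mul_sum]
          refine Finset.sum_congr rfl fun i _ => ?_
          rw [hcdef, Finset.mul_sum, Finset.mul_sum]
  have hvw2 : T = (n:ℝ)⁻¹ * ∑ i, (c i)^2 + lam * ∑ j, (w j)^2 := by
    rw [hTdef, ← hAw, dotProduct_comm, hAdef, Matrix.add_mulVec,
      dotProduct_add, Matrix.smul_mulVec, Matrix.one_mulVec, key]
    congr 1
    rw [dotProduct_smul, smul_eq_mul,
      show w ⬝ᵥ w = ∑ j, w j * w j from rfl, Finset.mul_sum, Finset.mul_sum]
    exact Finset.sum_congr rfl fun j _ => by ring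
  -- nonnegativity
  have hT0 : 0 ≤ T := by
    rw [hvw2]
    positivity
  have hc2 : ∑ i, (c i)^2 ≤ n * T := by
    have h1 : (n:ℝ)⁻¹ * ∑ i, (c i)^2 ≤ T := by
      rw [hvw2]
      nlinarith [Finset.sum_nonneg fun j (_ : j ∈ Finset.univ) => sq_nonneg (w j)]
    calc ∑ i, (c i)^2 = n * ((n:ℝ)⁻¹ * ∑ i, (c i)^2) := by field_simp
      _ ≤ n * T := by nlinarith
  -- Cauchy-Schwarz step
  set S := univ.filter fun i => b i ≠ 0 with hSdef
  have hsum1 : ∑ i, b i * c i = ∑ i ∈ S, b i * c i := by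
    rw [hSdef]
    exact (Finset.sum_filter_of_ne fun i _ h => by
      intro hb0; exact h (by rw [hb0, zero_mul])).symm
  have hsum2 : ∑ i ∈ S, b i * c i ≤ ζ * ∑ i ∈ S, |c i| := by
    rw [Finset.mul_sum]
    refine Finset.sum_le_sum fun i _ => ?_
    calc b i * c i ≤ |b i * c i| := le_abs_self _
      _ = |b i| * |c i| := abs_mul _ _
      _ ≤ ζ * |c i| := by
          exact mul_le_mul_of_nonneg_right (hb i) (abs_nonneg _)
  have hCS : (∑ i ∈ S, |c i|)^2 ≤ (S.card : ℝ) * ∑ i ∈ S, (c i)^2 := by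
    have := sq_sum_le_card_mul_sum_sq (s := S) (f := fun i => |c i|)
    simpa [sq_abs] using this
  have hsub : ∑ i ∈ S, (c i)^2 ≤ ∑ i, (c i)^2 :=
    Finset.sum_le_sum_of_subset_of_nonneg (Finset.subset_univ S)
      (fun i _ _ => sq_nonneg _)
  have habs : ∑ i ∈ S, |c i| ≤ Real.sqrt (α * n) * Real.sqrt (n * T) := by
    have h0 : (0:ℝ) ≤ ∑ i ∈ S, |c i| := Finset.sum_nonneg fun i _ => abs_nonneg _
    have h1 : (∑ i ∈ S, |c i|)^2 ≤ (α * n) * (n * T) := by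
      calc (∑ i ∈ S, |c i|)^2 ≤ (S.card : ℝ) * ∑ i ∈ S, (c i)^2 := hCS
        _ ≤ (α * n) * (n * T) := by
            refine mul_le_mul hcard (hsub.trans hc2) ?_ ?_
            · exact Finset.sum_nonneg fun i _ => sq_nonneg _
            · positivity
    calc ∑ i ∈ S, |c i| = Real.sqrt ((∑ i ∈ S, |c i|)^2) := (Real.sqrt_sq h0).symm
      _ ≤ Real.sqrt ((α * n) * (n * T)) := Real.sqrt_le_sqrt h1
      _ = Real.sqrt (α * n) * Real.sqrt (n * T) := Real.sqrt_mul (by positivity) _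
  -- combine
  have hmain : T ≤ (ζ * Real.sqrt α) * Real.sqrt T := by
    have h3 : ∑ i, b i * c i ≤ ζ * (Real.sqrt (α * n) * Real.sqrt (n * T)) := by
      rw [hsum1]; exact hsum2.trans (mul_le_mul_of_nonneg_left habs hζ.le)
    have h2 : T ≤ (n:ℝ)⁻¹ * (ζ * (Real.sqrt (α * n) * Real.sqrt (n * T))) :=
      calc T = (n:ℝ)⁻¹ * ∑ i, b i * c i := hvw1
        _ ≤ _ := mul_le_mul_of_nonneg_left h3 (by positivity)
    have hsn : Real.sqrt n * Real.sqrt n = (n:ℝ) := Real.mul_self_sqrt hn'.le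
    have heq : (n:ℝ)⁻¹ * (ζ * (Real.sqrt (α * n) * Real.sqrt (n * T)))
        = (ζ * Real.sqrt α) * Real.sqrt T := by
      rw [Real.sqrt_mul hα0, Real.sqrt_mul (le_of_lt hn'),
        show (n:ℝ)⁻¹ * (ζ * ((Real.sqrt α * Real.sqrt n) * (Real.sqrt n * Real.sqrt T)))
          = ((n:ℝ)⁻¹ * (Real.sqrt n * Real.sqrt n)) * ((ζ * Real.sqrt α) * Real.sqrt T)
          from by ring,
        hsn, inv_mul_cancel₀ hn'.ne', one_mul]
    rw [heq] at h2
    exact h2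
  -- conclude
  have hgoal : Real.sqrt T ≤ ζ * Real.sqrt α := by
    rcases eq_or_lt_of_le (Real.sqrt_nonneg T) with h | h
    · rw [← h]; positivity
    · have hsq : Real.sqrt T * Real.sqrt T = T := Real.mul_self_sqrt hT0
      nlinarith
  exact hgoal
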